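/- Let Λ be a row-finite strongly aperiodic k-graph with no sources. For every v ∈ Λ^0, the set S(v) = {χ ∈ χ_Λ : v ∈ χ} is a compact subset of χ_Λ in the topology generated by {S(w) : w ∈ Λ^0}. -/

import Mathlib

set_option autoImplicit false

open scoped Classical

/-- A `k`-graph: a countable small category together with a degree functor
`d : Λ → ℕ^k` satisfying the unique factorization property.  Paths (morphisms)
form a single type; vertices (objects) are identified with the paths of
degree `0`. -/
structure KGraph (k : ℕ) where
  /-- the type of paths (morphisms) of the `k`-graph -/
  Path : Type
  countable : Countable Path
  nonempty : Nonempty Path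
  /-- the range (codomain) vertex of a path -/
  r : Path → Path
  /-- the source (domain) vertex of a path -/
  s : Path → Path
  /-- composition: `comp lam mu` is the path `λμ`, meaningful when `s lam = r mu` -/
  comp : Path → Path → Path
  /-- the degree functor -/
  d : Path → Fin k → ℕ
  d_r : ∀ lam, d (r lam) = 0
  d_s : ∀ lam, d (s lam) = 0
  r_r : ∀ lam, r (r lam) = r lam
  s_r : ∀ lam, s (r lam) = r lam
  r_s : ∀ lam, r (s lam) = s lam
  s_s : ∀ lam, s (s lam) = s lam
  id_comp : ∀ lam, comp (r lam) lam = lam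
  comp_id : ∀ lam, comp lam (s lam) = lam
  r_comp : ∀ lam mu, s lam = r mu → r (comp lam mu) = r lam
  s_comp : ∀ lam mu, s lam = r mu → s (comp lam mu) = s mu
  d_comp : ∀ lam mu, s lam = r mu → d (comp lam mu) = d lam + d mu
  comp_assoc : ∀ lam mu nu, s lam = r mu → s mu = r nu →
    comp (comp lam mu) nu = comp lam (comp mu nu)
  /-- the unique factorization property -/
  factor : ∀ lam (m n : Fin k → ℕ), d lam = m + n →
    ∃! p : Path × Path, s p.1 = r p.2 ∧ comp p.1 p.2 = lam ∧ d p.1 = m ∧ d p.2 = n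

namespace KGraph

variable {k : ℕ}

/-- `v` is a vertex, i.e. an element of `Λ⁰`. -/
def IsVertex (Λ : KGraph k) (v : Λ.Path) : Prop := Λ.d v = 0

/-- `v ≤ w`, i.e. `vΛw ≠ ∅`. -/
def Conn (Λ : KGraph k) (v w : Λ.Path) : Prop := ∃ lam, Λ.r lam = v ∧ Λ.s lam = w

/-- the canonical generator `e i` of `ℕ^k`. -/
def eVec (k : ℕ) (i : Fin k) : Fin k → ℕ := Pi.single i 1

/-- `Λ` is row-finite: `vΛⁿ` is finite for every vertex `v` and `n ∈ ℕ^k`. -/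
def RowFinite (Λ : KGraph k) : Prop :=
  ∀ v, Λ.IsVertex v → ∀ n : Fin k → ℕ, {lam | Λ.r lam = v ∧ Λ.d lam = n}.Finite

/-- `Λ` has no sources: `vΛ^{e i} ≠ ∅` for every vertex `v` and `i`. -/
def NoSources (Λ : KGraph k) : Prop :=
  ∀ v, Λ.IsVertex v → ∀ i : Fin k, ∃ lam, Λ.r lam = v ∧ Λ.d lam = eVec k i

/-- the middle factor `λ(m,n)`: the unique `σ` such that `λ = μστ` with
`d μ = m`, `d σ = n - m`, `d τ = d λ - n` (junk value if no factorization exists). -/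
noncomputable def seg (Λ : KGraph k) (lam : Λ.Path) (m n : Fin k → ℕ) : Λ.Path :=
  if h : ∃ sig, ∃ mu tau, Λ.s mu = Λ.r sig ∧ Λ.s sig = Λ.r tau ∧
      Λ.comp (Λ.comp mu sig) tau = lam ∧ Λ.d mu = m ∧ Λ.d sig = n - m ∧
      Λ.d tau = Λ.d lam - n
  then h.choose else lam

/-- `Λ` has no local periodicity at the vertex `v`. -/
def NoLocalPeriodicity (Λ : KGraph k) (v : Λ.Path) : Prop :=
  ∀ m n : Fin k → ℕ, m ≠ n →
    ∃ lam, Λ.r lam = v ∧ m ⊔ n ≤ Λ.d lam ∧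
      Λ.seg lam m (m + Λ.d lam - (m ⊔ n)) ≠ Λ.seg lam n (n + Λ.d lam - (m ⊔ n))

/-- `Λ` is aperiodic: no vertex has local periodicity. -/
def Aperiodic (Λ : KGraph k) : Prop := ∀ v, Λ.IsVertex v → Λ.NoLocalPeriodicity v

/-- a hereditary set of vertices -/
def Hereditary (Λ : KGraph k) (H : Set Λ.Path) : Prop :=
  ∀ v ∈ H, ∀ w, Λ.Conn v w → w ∈ H

/-- a saturated set of vertices -/
def Saturated (Λ : KGraph k) (H : Set Λ.Path) : Prop :=
  ∀ v, Λ.IsVertex v → (∃ mu, Λ.r mu = v) →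
    (∃ i : Fin k, ∀ lam, Λ.r lam = v → Λ.d lam = eVec k i → Λ.s lam ∈ H) → v ∈ H

/-- the saturation of a set of vertices: the smallest saturated set containing it -/
def saturation (Λ : KGraph k) (H : Set Λ.Path) : Set Λ.Path :=
  ⋂₀ {K : Set Λ.Path | H ⊆ K ∧ Λ.Saturated K}

/-- no local periodicity at the vertex `v` of the quotient graph `Γ(Λ \ H)`
(whose paths are the paths of `Λ` with source outside `H`). -/
def QuotNoLocalPeriodicity (Λ : KGraph k) (H : Set Λ.Path) (v : Λ.Path) : Prop :=
  ∀ m n : Fin k → ℕ, m ≠ n →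
    ∃ lam, Λ.r lam = v ∧ Λ.s lam ∉ H ∧ m ⊔ n ≤ Λ.d lam ∧
      Λ.seg lam m (m + Λ.d lam - (m ⊔ n)) ≠ Λ.seg lam n (n + Λ.d lam - (m ⊔ n))

/-- `Λ` is strongly aperiodic: `Γ(Λ \ H)` is aperiodic for every saturated
hereditary proper subset `H ⊊ Λ⁰`. -/
def StronglyAperiodic (Λ : KGraph k) : Prop :=
  ∀ H : Set Λ.Path, (∀ v ∈ H, Λ.IsVertex v) → Λ.Hereditary H → Λ.Saturated H →
    H ≠ {v | Λ.IsVertex v} →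
    ∀ v, Λ.IsVertex v → v ∉ H → Λ.QuotNoLocalPeriodicity H v

/-- a maximal tail -/
def MaximalTail (Λ : KGraph k) (γ : Set Λ.Path) : Prop :=
  γ.Nonempty ∧ (∀ v ∈ γ, Λ.IsVertex v) ∧
  (∀ v₁ ∈ γ, ∀ v₂ ∈ γ, ∃ w ∈ γ, Λ.Conn v₁ w ∧ Λ.Conn v₂ w) ∧
  (∀ v ∈ γ, ∀ i : Fin k, ∃ f, Λ.r f = v ∧ Λ.d f = eVec k i ∧ Λ.s f ∈ γ) ∧
  (∀ v, Λ.IsVertex v → ∀ w ∈ γ, Λ.Conn v w → v ∈ γ)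

end KGraph

namespace KGraph

variable {k : ℕ}

/-- An infinite path in `Λ`: a degree-preserving functor `x : Ω_k → Λ`,
recorded by its values `x(m,n)` for `m ≤ n` in `ℕ^k`. -/
structure InfinitePath (Λ : KGraph k) where
  toFun : (Fin k → ℕ) → (Fin k → ℕ) → Λ.Path
  d_eq : ∀ m n : Fin k → ℕ, m ≤ n → Λ.d (toFun m n) = n - m
  r_eq : ∀ m n : Fin k → ℕ, m ≤ n → Λ.r (toFun m n) = toFun m m
  s_eq : ∀ m n : Fin k → ℕ, m ≤ n → Λ.s (toFun m n) = toFun n n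
  comp_eq : ∀ m n p : Fin k → ℕ, m ≤ n → n ≤ p →
    Λ.comp (toFun m n) (toFun n p) = toFun m p

/-- `β(x) = {v ∈ Λ⁰ : vΛx(n,n) ≠ ∅ for some n ∈ ℕ^k}`. -/
def tailOf (Λ : KGraph k) (x : Λ.InfinitePath) : Set Λ.Path :=
  {v | Λ.IsVertex v ∧ ∃ n : Fin k → ℕ, Λ.Conn v (x.toFun n n)}

/-- the cylinder set `Z(μ) = {x ∈ Λ^∞ : x(0, d(μ)) = μ}`. -/
def cyl (Λ : KGraph k) (mu : Λ.Path) : Set Λ.InfinitePath :=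
  {x | x.toFun 0 (Λ.d mu) = mu}

/-- the topology on `Λ^∞` generated by the cylinder sets -/
instance instTopInfinitePath (Λ : KGraph k) : TopologicalSpace Λ.InfinitePath :=
  TopologicalSpace.generateFrom {U | ∃ mu : Λ.Path, U = Λ.cyl mu}

/-- `χ_Λ`, the set of maximal tails of `Λ` -/
def MaxTail (Λ : KGraph k) : Type := {γ : Set Λ.Path // Λ.MaximalTail γ}

/-- `S(v) = {χ ∈ χ_Λ : v ∈ χ}`. -/
def Sv (Λ : KGraph k) (v : Λ.Path) : Set Λ.MaxTail := {χ | v ∈ χ.1}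

/-- the topology on `χ_Λ` generated by the sets `S(v)`, `v ∈ Λ⁰` -/
instance instTopMaxTail (Λ : KGraph k) : TopologicalSpace Λ.MaxTail :=
  TopologicalSpace.generateFrom {U | ∃ v, Λ.IsVertex v ∧ U = Λ.Sv v}

end KGraph


namespace KGraph

section Aux

variable {k : ℕ} (Λ : KGraph k)

lemma vertex_rs {v : Λ.Path} (hv : Λ.IsVertex v) : Λ.r v = v ∧ Λ.s v = v := by
  have hfac := Λ.factor v 0 0 (by rw [hv]; simp)
  have h1 : ((Λ.r v, v) : Λ.Path × Λ.Path) = (v, Λ.s v) := by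
    refine hfac.unique ⟨Λ.s_r v, Λ.id_comp v, Λ.d_r v, hv⟩ ⟨(Λ.r_s v).symm, Λ.comp_id v, hv, Λ.d_s v⟩
  exact ⟨congrArg Prod.fst h1, (congrArg Prod.snd h1).symm⟩

lemma vertex_r {v : Λ.Path} (hv : Λ.IsVertex v) : Λ.r v = v := (Λ.vertex_rs hv).1
lemma vertex_s {v : Λ.Path} (hv : Λ.IsVertex v) : Λ.s v = v := (Λ.vertex_rs hv).2

lemma isVertex_s (lam : Λ.Path) : Λ.IsVertex (Λ.s lam) := Λ.d_s lam
lemma isVertex_r (lam : Λ.Path) : Λ.IsVertex (Λ.r lam) := Λ.d_r lam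

lemma conn_refl {v : Λ.Path} (hv : Λ.IsVertex v) : Λ.Conn v v :=
  ⟨v, Λ.vertex_r hv, Λ.vertex_s hv⟩

lemma conn_trans {u v w : Λ.Path} (h1 : Λ.Conn u v) (h2 : Λ.Conn v w) : Λ.Conn u w := by
  obtain ⟨a, hra, hsa⟩ := h1
  obtain ⟨b, hrb, hsb⟩ := h2
  have hab : Λ.s a = Λ.r b := by rw [hsa, hrb]
  exact ⟨Λ.comp a b, by rw [Λ.r_comp _ _ hab, hra], by rw [Λ.s_comp _ _ hab, hsb]⟩

/-- the canonical factorization of `lam` at degree `m`. -/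
noncomputable def fsplit (lam : Λ.Path) (m : Fin k → ℕ) : Λ.Path × Λ.Path :=
  if h : ∃ p : Λ.Path × Λ.Path, Λ.s p.1 = Λ.r p.2 ∧ Λ.comp p.1 p.2 = lam ∧
      Λ.d p.1 = m ∧ Λ.d p.2 = Λ.d lam - m
  then h.choose else (lam, lam)

lemma fsplit_ex {lam : Λ.Path} {m : Fin k → ℕ} (h : m ≤ Λ.d lam) :
    ∃ p : Λ.Path × Λ.Path, Λ.s p.1 = Λ.r p.2 ∧ Λ.comp p.1 p.2 = lam ∧
      Λ.d p.1 = m ∧ Λ.d p.2 = Λ.d lam - m := by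
  obtain ⟨p, hp, -⟩ := Λ.factor lam m (Λ.d lam - m)
    (by funext i; have := Pi.le_def.mp h i; simp only [Pi.add_apply, Pi.sub_apply]; omega)
  exact ⟨p, hp⟩

lemma fsplit_spec {lam : Λ.Path} {m : Fin k → ℕ} (h : m ≤ Λ.d lam) :
    Λ.s (Λ.fsplit lam m).1 = Λ.r (Λ.fsplit lam m).2 ∧
    Λ.comp (Λ.fsplit lam m).1 (Λ.fsplit lam m).2 = lam ∧
    Λ.d (Λ.fsplit lam m).1 = m ∧ Λ.d (Λ.fsplit lam m).2 = Λ.d lam - m := by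
  have he := Λ.fsplit_ex h
  rw [fsplit, dif_pos he]
  exact he.choose_spec

lemma fsplit_unique {lam : Λ.Path} {m : Fin k → ℕ} {a b : Λ.Path}
    (hs : Λ.s a = Λ.r b) (hc : Λ.comp a b = lam) (hd : Λ.d a = m) :
    Λ.fsplit lam m = (a, b) := by
  have hdl : Λ.d lam = Λ.d a + Λ.d b := by rw [← hc, Λ.d_comp a b hs]
  have hdb : Λ.d b = Λ.d lam - m := by
    funext i
    have := congrFun hdl i
    have h2 := congrFun hd i
    simp only [Pi.add_apply] at this
    simp only [Pi.sub_apply]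
    omega
  have hm : m ≤ Λ.d lam := by
    refine Pi.le_def.mpr fun i => ?_
    have := congrFun hdl i
    have h2 := congrFun hd i
    simp only [Pi.add_apply] at this
    omega
  obtain ⟨p, hp, hu⟩ := Λ.factor lam m (Λ.d lam - m)
    (by funext i; have := Pi.le_def.mp hm i; simp only [Pi.add_apply, Pi.sub_apply]; omega)
  have h1 := hu (Λ.fsplit lam m) (Λ.fsplit_spec hm)
  have h2 := hu (a, b) ⟨hs, hc, hd, hdb⟩
  rw [h1, h2]

lemma fsplit_zero (lam : Λ.Path) : Λ.fsplit lam 0 = (Λ.r lam, lam) :=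
  Λ.fsplit_unique (Λ.s_r lam) (Λ.id_comp lam) (Λ.d_r lam)

lemma fsplit_top (lam : Λ.Path) : Λ.fsplit lam (Λ.d lam) = (lam, Λ.s lam) :=
  Λ.fsplit_unique (Λ.r_s lam).symm (Λ.comp_id lam) rfl

lemma fsplit_pre_pre {lam : Λ.Path} {m n : Fin k → ℕ} (hmn : m ≤ n) (hn : n ≤ Λ.d lam) :
    (Λ.fsplit lam m).1 = (Λ.fsplit (Λ.fsplit lam n).1 m).1 := by
  obtain ⟨hs1, hc1, hd1, -⟩ := Λ.fsplit_spec hn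
  have hmP : m ≤ Λ.d (Λ.fsplit lam n).1 := by rw [hd1]; exact hmn
  obtain ⟨hs2, hc2, hd2, -⟩ := Λ.fsplit_spec hmP
  have hSR : Λ.s (Λ.fsplit (Λ.fsplit lam n).1 m).2 = Λ.r (Λ.fsplit lam n).2 := by
    have h := Λ.s_comp _ _ hs2
    rw [hc2] at h
    rw [← h]
    exact hs1
  have hc3 : Λ.s (Λ.fsplit (Λ.fsplit lam n).1 m).1 =
      Λ.r (Λ.comp (Λ.fsplit (Λ.fsplit lam n).1 m).2 (Λ.fsplit lam n).2) := by
    rw [Λ.r_comp _ _ hSR]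
    exact hs2
  have hc4 : Λ.comp (Λ.fsplit (Λ.fsplit lam n).1 m).1
      (Λ.comp (Λ.fsplit (Λ.fsplit lam n).1 m).2 (Λ.fsplit lam n).2) = lam := by
    rw [← Λ.comp_assoc _ _ _ hs2 hSR, hc2, hc1]
  have hkey := Λ.fsplit_unique hc3 hc4 hd2
  rw [hkey]

end Aux

/-- A coherent family of paths, one of each degree, each a prefix of the later ones. -/
structure CohFam {k : ℕ} (Λ : KGraph k) where
  fn : (Fin k → ℕ) → Λ.Path
  d_fn : ∀ n, Λ.d (fn n) = n
  coh : ∀ m n, m ≤ n → ∃ ρ, Λ.s (fn m) = Λ.r ρ ∧ Λ.comp (fn m) ρ = fn n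

namespace CohFam

variable {k : ℕ} {Λ : KGraph k}

lemma pre_eq (c : CohFam Λ) {m n : Fin k → ℕ} (h : m ≤ n) :
    (Λ.fsplit (c.fn n) m).1 = c.fn m := by
  obtain ⟨ρ, hs, hc⟩ := c.coh m n h
  rw [Λ.fsplit_unique hs hc (c.d_fn m)]

lemma spec (c : CohFam Λ) {m n : Fin k → ℕ} (h : m ≤ n) :
    Λ.s (c.fn m) = Λ.r ((Λ.fsplit (c.fn n) m).2) ∧
    Λ.comp (c.fn m) ((Λ.fsplit (c.fn n) m).2) = c.fn n ∧
    Λ.d ((Λ.fsplit (c.fn n) m).2) = n - m := by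
  have hm : m ≤ Λ.d (c.fn n) := by rw [c.d_fn]; exact h
  obtain ⟨h1, h2, h3, h4⟩ := Λ.fsplit_spec hm
  rw [c.pre_eq h] at h1 h2
  rw [c.d_fn] at h4
  exact ⟨h1, h2, h4⟩

lemma snd_diag (c : CohFam Λ) (n : Fin k → ℕ) :
    (Λ.fsplit (c.fn n) n).2 = Λ.s (c.fn n) := by
  have h := Λ.fsplit_top (c.fn n)
  rw [c.d_fn] at h
  rw [h]

/-- the infinite path determined by a coherent family -/
noncomputable def path (c : CohFam Λ) : Λ.InfinitePath where
  toFun m n := (Λ.fsplit (c.fn n) m).2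
  d_eq m n h := (c.spec h).2.2
  r_eq m n h := by
    show Λ.r ((Λ.fsplit (c.fn n) m).2) = (Λ.fsplit (c.fn m) m).2
    have h1 := (c.spec h).1
    rw [c.snd_diag m, ← h1]
  s_eq m n h := by
    show Λ.s ((Λ.fsplit (c.fn n) m).2) = (Λ.fsplit (c.fn n) n).2
    obtain ⟨h1, h2, -⟩ := c.spec h
    have h3 := Λ.s_comp _ _ h1
    rw [h2] at h3
    rw [c.snd_diag n, ← h3]
  comp_eq m n p hmn hnp := by
    obtain ⟨ha1, ha2, -⟩ := c.spec hmn
    obtain ⟨hb1, hb2, -⟩ := c.spec hnp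
    have hsa : Λ.s (c.fn n) = Λ.s ((Λ.fsplit (c.fn n) m).2) := by
      have h := Λ.s_comp _ _ ha1
      rw [ha2] at h
      exact h
    have hab : Λ.s ((Λ.fsplit (c.fn n) m).2) = Λ.r ((Λ.fsplit (c.fn p) n).2) := by
      rw [← hsa]; exact hb1
    have hc1 : Λ.s (c.fn m) =
        Λ.r (Λ.comp ((Λ.fsplit (c.fn n) m).2) ((Λ.fsplit (c.fn p) n).2)) := by
      rw [Λ.r_comp _ _ hab]; exact ha1
    have hc2 : Λ.comp (c.fn m)
        (Λ.comp ((Λ.fsplit (c.fn n) m).2) ((Λ.fsplit (c.fn p) n).2)) = c.fn p := by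
      rw [← Λ.comp_assoc _ _ _ ha1 hab, ha2, hb2]
    have hkey := Λ.fsplit_unique hc1 hc2 (c.d_fn m)
    show Λ.comp ((Λ.fsplit (c.fn n) m).2) ((Λ.fsplit (c.fn p) n).2) = (Λ.fsplit (c.fn p) m).2
    rw [hkey]

lemma path_toFun (c : CohFam Λ) (m n : Fin k → ℕ) :
    c.path.toFun m n = (Λ.fsplit (c.fn n) m).2 := rfl

lemma path_zero (c : CohFam Λ) (n : Fin k → ℕ) : c.path.toFun 0 n = c.fn n := by
  rw [c.path_toFun, Λ.fsplit_zero]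

lemma path_diag (c : CohFam Λ) (n : Fin k → ℕ) : c.path.toFun n n = Λ.s (c.fn n) := by
  rw [c.path_toFun, c.snd_diag]

end CohFam

section Tail

variable {k : ℕ} (Λ : KGraph k)

lemma diag_isVertex (x : Λ.InfinitePath) (n : Fin k → ℕ) : Λ.IsVertex (x.toFun n n) := by
  show Λ.d (x.toFun n n) = 0
  rw [x.d_eq n n le_rfl]
  simp

lemma conn_diag (x : Λ.InfinitePath) {m n : Fin k → ℕ} (h : m ≤ n) :
    Λ.Conn (x.toFun m m) (x.toFun n n) :=
  ⟨x.toFun m n, x.r_eq m n h, x.s_eq m n h⟩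

lemma mem_tailOf_diag (x : Λ.InfinitePath) (n : Fin k → ℕ) : x.toFun n n ∈ Λ.tailOf x :=
  ⟨Λ.diag_isVertex x n, n, Λ.conn_diag x le_rfl⟩

lemma maximalTail_tailOf (x : Λ.InfinitePath) : Λ.MaximalTail (Λ.tailOf x) := by
  refine ⟨⟨x.toFun 0 0, Λ.mem_tailOf_diag x 0⟩, fun v hv => hv.1, ?_, ?_, ?_⟩
  · rintro v1 ⟨-, n1, h1⟩ v2 ⟨-, n2, h2⟩
    exact ⟨x.toFun (n1 ⊔ n2) (n1 ⊔ n2), Λ.mem_tailOf_diag x _,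
      Λ.conn_trans h1 (Λ.conn_diag x le_sup_left),
      Λ.conn_trans h2 (Λ.conn_diag x le_sup_right)⟩
  · rintro v ⟨hvv, n, μ, hrμ, hsμ⟩ i
    set e := eVec k i with he
    have hle : n ≤ n + e := le_self_add
    have hcond : Λ.s μ = Λ.r (x.toFun n (n + e)) := by
      rw [x.r_eq n (n + e) hle, hsμ]
    have hdν : Λ.d (Λ.comp μ (x.toFun n (n + e))) = Λ.d μ + e := by
      rw [Λ.d_comp _ _ hcond, x.d_eq n (n + e) hle]
      simp
    have hfac : Λ.d (Λ.comp μ (x.toFun n (n + e))) = e + (Λ.d (Λ.comp μ (x.toFun n (n + e))) - e) := by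
      funext i'
      have h1 := congrFun hdν i'
      simp only [Pi.add_apply] at h1
      simp only [Pi.add_apply, Pi.sub_apply]
      omega
    obtain ⟨⟨f, ρ⟩, ⟨hs, hc, hdf, hdρ⟩, -⟩ :=
      Λ.factor (Λ.comp μ (x.toFun n (n + e))) e (Λ.d (Λ.comp μ (x.toFun n (n + e))) - e) hfac
    refine ⟨f, ?_, hdf, ?_⟩
    · have h2 := Λ.r_comp _ _ hs
      rw [hc] at h2
      rw [← h2, Λ.r_comp _ _ hcond, hrμ]
    · have h3 := Λ.s_comp _ _ hs
      rw [hc] at h3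
      have h4 := Λ.s_comp _ _ hcond
      rw [x.s_eq n (n + e) hle] at h4
      exact ⟨Λ.isVertex_s f, n + e, ρ, hs.symm, by rw [← h3, h4]⟩
  · rintro v hv w hw hconn
    obtain ⟨-, n, hconn2⟩ := hw
    exact ⟨hv, n, Λ.conn_trans hconn hconn2⟩

lemma mem_cyl_vertex {v : Λ.Path} (hv : Λ.IsVertex v) (x : Λ.InfinitePath) :
    x ∈ Λ.cyl v ↔ x.toFun 0 0 = v := by
  show x.toFun 0 (Λ.d v) = v ↔ _
  rw [show Λ.d v = 0 from hv]

end Tail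

section Compactness

variable {k : ℕ} (Λ : KGraph k)

lemma isCompact_cyl {v : Λ.Path} (hv : Λ.IsVertex v) (hrf : Λ.RowFinite) :
    IsCompact (Λ.cyl v) := by
  rw [isCompact_iff_ultrafilter_le_nhds]
  intro F hF
  have hFv : Λ.cyl v ∈ F := Filter.le_principal_iff.mp hF
  have key : ∀ n : Fin k → ℕ, ∃ lam, Λ.r lam = v ∧ Λ.d lam = n ∧
      {x : Λ.InfinitePath | x.toFun 0 n = lam} ∈ F := by
    intro n
    have hsub : Λ.cyl v ⊆ (fun x : Λ.InfinitePath => x.toFun 0 n) ⁻¹'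
        {lam | Λ.r lam = v ∧ Λ.d lam = n} := by
      intro x hx
      have h0 : x.toFun 0 0 = v := (Λ.mem_cyl_vertex hv x).mp hx
      constructor
      · rw [x.r_eq 0 n (zero_le), h0]
      · rw [x.d_eq 0 n (zero_le)]; simp
    have hmem : {lam | Λ.r lam = v ∧ Λ.d lam = n} ∈
        F.map (fun x : Λ.InfinitePath => x.toFun 0 n) :=
      Ultrafilter.mem_map.mpr (Filter.mem_of_superset hFv hsub)
    obtain ⟨lam, hlamT, hpure⟩ := Ultrafilter.eq_pure_of_finite_mem (hrf v hv n) hmem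
    refine ⟨lam, hlamT.1, hlamT.2, ?_⟩
    have hsing : {lam} ∈ F.map (fun x : Λ.InfinitePath => x.toFun 0 n) := by
      rw [hpure]
      exact Ultrafilter.mem_pure.mpr rfl
    rw [Ultrafilter.mem_map] at hsing
    exact hsing
  choose lam hr hd hFmem using key
  have coh : ∀ m n : Fin k → ℕ, m ≤ n → ∃ ρ, Λ.s (lam m) = Λ.r ρ ∧ Λ.comp (lam m) ρ = lam n := by
    intro m n hmn
    have hne : ({x : Λ.InfinitePath | x.toFun 0 m = lam m} ∩
        {x | x.toFun 0 n = lam n}).Nonempty :=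
      Ultrafilter.nonempty_of_mem (Filter.inter_mem (hFmem m) (hFmem n))
    obtain ⟨x, hxm, hxn⟩ := hne
    refine ⟨x.toFun m n, ?_, ?_⟩
    · rw [← hxm, x.s_eq 0 m (zero_le), x.r_eq m n hmn]
    · rw [← hxm, ← hxn, x.comp_eq 0 m n (zero_le) hmn]
  let c : CohFam Λ := ⟨lam, hd, coh⟩
  have hcfn : c.fn = lam := rfl
  refine ⟨c.path, ?_, ?_⟩
  · rw [Λ.mem_cyl_vertex hv]
    rw [c.path_diag 0, hcfn]
    have h0 : Λ.IsVertex (lam 0) := hd 0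
    rw [Λ.vertex_s h0, ← Λ.vertex_r h0]
    exact hr 0
  · have hnhds : (nhds c.path : Filter Λ.InfinitePath) =
        ⨅ s ∈ {s | c.path ∈ s ∧ s ∈ {U | ∃ mu : Λ.Path, U = Λ.cyl mu}}, Filter.principal s :=
      TopologicalSpace.nhds_generateFrom
    rw [hnhds]
    refine le_iInf₂ fun s hs => ?_
    obtain ⟨hxs, mu, rfl⟩ := hs
    rw [Filter.le_principal_iff]
    have hmu : lam (Λ.d mu) = mu := by
      have h1 : c.path.toFun 0 (Λ.d mu) = mu := hxs
      rwa [c.path_zero, hcfn] at h1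
    have h2 := hFmem (Λ.d mu)
    rw [hmu] at h2
    exact h2

end Compactness

section Surjectivity

variable {k : ℕ} (Λ : KGraph k)

lemma exists_path_of_mem_tail {v : Λ.Path} (hv : Λ.IsVertex v) {γ : Set Λ.Path}
    (hγ : Λ.MaximalTail γ) (hvγ : v ∈ γ) : ∃ x ∈ Λ.cyl v, Λ.tailOf x = γ := by
  obtain ⟨hne, hvert, hdir, hext, hback⟩ := hγ
  haveI := Λ.countable
  obtain ⟨u, hu⟩ := (Set.to_countable γ).exists_eq_range hne
  have huγ : ∀ j, u j ∈ γ := by intro j; rw [hu]; exact ⟨j, rfl⟩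
  have steps : ∀ j : ℕ, ∀ w ∈ γ, ∃ τ, Λ.r τ = w ∧ Λ.s τ ∈ γ ∧
      ∀ i : Fin k, (i : ℕ) < j → 1 ≤ Λ.d τ i := by
    intro j
    induction j with
    | zero =>
      intro w hw
      exact ⟨w, Λ.vertex_r (hvert w hw), by rw [Λ.vertex_s (hvert w hw)]; exact hw,
        fun i hi => absurd hi (Nat.not_lt_zero _)⟩
    | succ j ih =>
      intro w hw
      obtain ⟨τ, hrτ, hsτ, hdτ⟩ := ih w hw
      by_cases hj : j < k
      · obtain ⟨f, hrf, hdf, hsf⟩ := hext _ hsτ ⟨j, hj⟩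
        refine ⟨Λ.comp τ f, ?_, ?_, ?_⟩
        · rw [Λ.r_comp _ _ hrf.symm, hrτ]
        · rw [Λ.s_comp _ _ hrf.symm]; exact hsf
        · intro i hi
          rw [Λ.d_comp _ _ hrf.symm, hdf]
          simp only [Pi.add_apply]
          rcases Nat.lt_succ_iff_lt_or_eq.mp hi with h | h
          · have := hdτ i h; omega
          · have hieq : i = (⟨j, hj⟩ : Fin k) := Fin.ext h
            subst hieq
            simp [eVec, Pi.single_eq_same]
      · exact ⟨τ, hrτ, hsτ, fun i hi => hdτ i (by have := i.isLt; omega)⟩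
  have next : ∀ (j : ℕ) (p : Λ.Path), Λ.s p ∈ γ → ∃ q, ∃ ρ,
      Λ.s p = Λ.r ρ ∧ q = Λ.comp p ρ ∧ Λ.s q ∈ γ ∧
      (∀ i, Λ.d p i + 1 ≤ Λ.d q i) ∧ Λ.Conn (u j) (Λ.s q) := by
    intro j p hp
    obtain ⟨w, hwγ, ⟨α, hrα, hsα⟩, β, hrβ, hsβ⟩ := hdir _ hp _ (huγ j)
    obtain ⟨τ, hrτ, hsτ, hdτ⟩ := steps k w hwγ
    have hατ : Λ.s α = Λ.r τ := by rw [hsα, hrτ]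
    have hpρ : Λ.s p = Λ.r (Λ.comp α τ) := by rw [Λ.r_comp _ _ hατ, hrα]
    have hsq : Λ.s (Λ.comp p (Λ.comp α τ)) = Λ.s τ := by
      rw [Λ.s_comp _ _ hpρ, Λ.s_comp _ _ hατ]
    refine ⟨Λ.comp p (Λ.comp α τ), Λ.comp α τ, hpρ, rfl, ?_, ?_, ?_⟩
    · rw [hsq]; exact hsτ
    · intro i
      rw [Λ.d_comp _ _ hpρ, Λ.d_comp _ _ hατ]
      simp only [Pi.add_apply]
      have := hdτ i i.isLt
      omega
    · have hβτ : Λ.s β = Λ.r τ := by rw [hsβ, hrτ]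
      exact ⟨Λ.comp β τ, by rw [Λ.r_comp _ _ hβτ, hrβ], by rw [Λ.s_comp _ _ hβτ, hsq]⟩
  have next' : ∀ (j : ℕ) (p : Λ.Path), ∃ q, Λ.s p ∈ γ → ∃ ρ,
      Λ.s p = Λ.r ρ ∧ q = Λ.comp p ρ ∧ Λ.s q ∈ γ ∧
      (∀ i, Λ.d p i + 1 ≤ Λ.d q i) ∧ Λ.Conn (u j) (Λ.s q) := by
    intro j p
    by_cases h : Λ.s p ∈ γ
    · obtain ⟨q, hq⟩ := next j p h
      exact ⟨q, fun _ => hq⟩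
    · exact ⟨p, fun h' => absurd h' h⟩
  choose g hg using next'
  obtain ⟨μ, hμ0, hμs⟩ : ∃ μ : ℕ → Λ.Path, μ 0 = v ∧ ∀ j, μ (j + 1) = g j (μ j) :=
    ⟨fun j => Nat.rec v g j, rfl, fun j => rfl⟩
  have inv : ∀ j, Λ.s (μ j) ∈ γ := by
    intro j
    induction j with
    | zero => rw [hμ0, Λ.vertex_s hv]; exact hvγ
    | succ j ih =>
      obtain ⟨ρ, -, -, h3, -, -⟩ := hg j (μ j) ih
      rw [hμs j]
      exact h3
  have hnext : ∀ j, ∃ ρ, Λ.s (μ j) = Λ.r ρ ∧ μ (j + 1) = Λ.comp (μ j) ρ ∧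
      Λ.s (μ (j + 1)) ∈ γ ∧ (∀ i, Λ.d (μ j) i + 1 ≤ Λ.d (μ (j + 1)) i) ∧
      Λ.Conn (u j) (Λ.s (μ (j + 1))) := by
    intro j
    rw [hμs j]
    exact hg j (μ j) (inv j)
  have hrμ : ∀ j, Λ.r (μ j) = v := by
    intro j
    induction j with
    | zero => rw [hμ0]; exact Λ.vertex_r hv
    | succ j ih =>
      obtain ⟨ρ, hs, hq, -⟩ := hnext j
      rw [hq, Λ.r_comp _ _ hs, ih]
  have hgrow : ∀ j (i : Fin k), j ≤ Λ.d (μ j) i := by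
    intro j
    induction j with
    | zero => intro i; exact Nat.zero_le _
    | succ j ih =>
      intro i
      obtain ⟨ρ, -, -, -, hdd, -⟩ := hnext j
      have := hdd i
      have := ih i
      omega
  have hdmono : ∀ a b : ℕ, a ≤ b → Λ.d (μ a) ≤ Λ.d (μ b) := by
    intro a b hab
    induction b, hab using Nat.le_induction with
    | base => exact le_rfl
    | succ b hb ih =>
      refine Pi.le_def.mpr fun i => ?_
      obtain ⟨ρ, -, -, -, hdd, -⟩ := hnext b
      have := hdd i
      have := Pi.le_def.mp ih i
      omega
  have hpre1 : ∀ j (m : Fin k → ℕ), m ≤ Λ.d (μ j) →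
      (Λ.fsplit (μ (j + 1)) m).1 = (Λ.fsplit (μ j) m).1 := by
    intro j m hm
    obtain ⟨ρ, hs, hq, -⟩ := hnext j
    have htop : (Λ.fsplit (μ (j + 1)) (Λ.d (μ j))).1 = μ j := by
      rw [Λ.fsplit_unique hs hq.symm rfl]
    have hd' : Λ.d (μ j) ≤ Λ.d (μ (j + 1)) := hdmono j (j + 1) (Nat.le_succ j)
    have h := Λ.fsplit_pre_pre (lam := μ (j + 1)) hm hd'
    rw [htop] at h
    exact h
  have hpre : ∀ a b : ℕ, a ≤ b → ∀ m : Fin k → ℕ, m ≤ Λ.d (μ a) →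
      (Λ.fsplit (μ b) m).1 = (Λ.fsplit (μ a) m).1 := by
    intro a b hab
    induction b, hab using Nat.le_induction with
    | base => intro m _; rfl
    | succ b hb ih =>
      intro m hm
      rw [hpre1 b m (le_trans hm (hdmono a b hb)), ih m hm]
  have hJ : ∀ n : Fin k → ℕ, n ≤ Λ.d (μ (Finset.univ.sup n)) := by
    intro n
    refine Pi.le_def.mpr fun i => ?_
    exact le_trans (Finset.le_sup (Finset.mem_univ i)) (hgrow _ i)
  have hfamd : ∀ n : Fin k → ℕ, Λ.d ((Λ.fsplit (μ (Finset.univ.sup n)) n).1) = n :=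
    fun n => (Λ.fsplit_spec (hJ n)).2.2.1
  have hfam_eq : ∀ (n : Fin k → ℕ) (j : ℕ), n ≤ Λ.d (μ j) →
      (Λ.fsplit (μ (Finset.univ.sup n)) n).1 = (Λ.fsplit (μ j) n).1 := by
    intro n j hnj
    rcases le_total (Finset.univ.sup n) j with h | h
    · exact (hpre _ j h n (hJ n)).symm
    · exact hpre j _ h n hnj
  have hfam_top : ∀ j, (Λ.fsplit (μ (Finset.univ.sup (Λ.d (μ j)))) (Λ.d (μ j))).1 = μ j := by
    intro j
    rw [hfam_eq _ j le_rfl, Λ.fsplit_top]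
  have coh : ∀ m n : Fin k → ℕ, m ≤ n → ∃ ρ,
      Λ.s ((Λ.fsplit (μ (Finset.univ.sup m)) m).1) = Λ.r ρ ∧
      Λ.comp ((Λ.fsplit (μ (Finset.univ.sup m)) m).1) ρ = (Λ.fsplit (μ (Finset.univ.sup n)) n).1 := by
    intro m n hmn
    set j := max (Finset.univ.sup m) (Finset.univ.sup n) with hj
    have hmj : m ≤ Λ.d (μ j) := le_trans (hJ m) (hdmono _ _ (le_max_left _ _))
    have hnj : n ≤ Λ.d (μ j) := le_trans (hJ n) (hdmono _ _ (le_max_right _ _))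
    have h1 : (Λ.fsplit (μ (Finset.univ.sup n)) n).1 = (Λ.fsplit (μ j) n).1 := hfam_eq n j hnj
    have h2 : (Λ.fsplit (μ (Finset.univ.sup m)) m).1 =
        (Λ.fsplit ((Λ.fsplit (μ (Finset.univ.sup n)) n).1) m).1 := by
      rw [hfam_eq m j hmj, h1, ← Λ.fsplit_pre_pre hmn hnj]
    have hm' : m ≤ Λ.d ((Λ.fsplit (μ (Finset.univ.sup n)) n).1) := by
      rw [hfamd n]; exact hmn
    obtain ⟨hs, hc, -, -⟩ := Λ.fsplit_spec hm'
    exact ⟨(Λ.fsplit ((Λ.fsplit (μ (Finset.univ.sup n)) n).1) m).2,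
      by rw [h2]; exact hs, by rw [h2]; exact hc⟩
  let c : CohFam Λ := ⟨fun n => (Λ.fsplit (μ (Finset.univ.sup n)) n).1, hfamd, coh⟩
  have hcfn : ∀ n, c.fn n = (Λ.fsplit (μ (Finset.univ.sup n)) n).1 := fun n => rfl
  refine ⟨c.path, ?_, ?_⟩
  · rw [Λ.mem_cyl_vertex hv, c.path_zero, hcfn 0]
    have h0 : (0 : Fin k → ℕ) ≤ Λ.d (μ 0) := zero_le
    rw [hfam_eq 0 0 h0, Λ.fsplit_zero]
    exact hrμ 0
  · apply Set.eq_of_subset_of_subset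
    · rintro w ⟨hwv, n, hconn⟩
      rw [c.path_diag n] at hconn
      have hsfam : Λ.s (c.fn n) ∈ γ := by
        obtain ⟨hs, hc, -, -⟩ := Λ.fsplit_spec (hJ n)
        have hconn2 : Λ.Conn (Λ.s (c.fn n)) (Λ.s (μ (Finset.univ.sup n))) := by
          refine ⟨(Λ.fsplit (μ (Finset.univ.sup n)) n).2, ?_, ?_⟩
          · rw [hcfn n]; exact hs.symm
          · have h5 := Λ.s_comp _ _ hs
            rw [hc] at h5
            exact h5.symm
        exact hback _ (Λ.isVertex_s _) _ (inv _) hconn2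
      exact hback w hwv _ hsfam hconn
    · intro w hw
      have hw' := hw
      rw [hu] at hw'
      obtain ⟨j, rfl⟩ := hw'
      obtain ⟨ρ, -, -, -, -, hconn⟩ := hnext j
      refine ⟨hvert _ hw, Λ.d (μ (j + 1)), ?_⟩
      rw [c.path_diag, hcfn, hfam_top (j + 1)]
      exact hconn

end Surjectivity

section Final

variable {k : ℕ} (Λ : KGraph k)

/-- the map sending an infinite path to the maximal tail it generates -/
def tailMap (Λ : KGraph k) : Λ.InfinitePath → Λ.MaxTail :=
  fun x => ⟨Λ.tailOf x, Λ.maximalTail_tailOf x⟩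

end Final

end KGraph

/-- Each `S(v)` is a compact subset of `χ_Λ`. -/
theorem stmt15 {k : ℕ} (Λ : KGraph k) (hrf : Λ.RowFinite) (hns : Λ.NoSources)
    (hsa : Λ.StronglyAperiodic) :
    ∀ v, Λ.IsVertex v → IsCompact (Λ.Sv v) := by
  intro v hv
  have hcont : Continuous Λ.tailMap := by
    refine continuous_generateFrom_iff.mpr ?_
    rintro U ⟨w, hw, rfl⟩
    have hpre : Λ.tailMap ⁻¹' (Λ.Sv w) =
        ⋃ (μ : Λ.Path) (_ : Λ.Conn w (Λ.s μ)), Λ.cyl μ := by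
      ext x
      simp only [Set.mem_preimage, Set.mem_iUnion]
      constructor
      · rintro ⟨-, n, hconn⟩
        refine ⟨x.toFun 0 n, ?_, ?_⟩
        · rwa [x.s_eq 0 n (zero_le)]
        · show x.toFun 0 (Λ.d (x.toFun 0 n)) = x.toFun 0 n
          rw [x.d_eq 0 n (zero_le), tsub_zero]
      · rintro ⟨μ, hconn, hx⟩
        refine ⟨hw, Λ.d μ, ?_⟩
        have h1 : Λ.s (x.toFun 0 (Λ.d μ)) = x.toFun (Λ.d μ) (Λ.d μ) := x.s_eq 0 _ (zero_le)
        rw [hx] at h1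
        rw [← h1]
        exact hconn
    rw [hpre]
    exact isOpen_iUnion fun μ => isOpen_iUnion fun _ =>
      TopologicalSpace.GenerateOpen.basic _ ⟨μ, rfl⟩
  have himg : Λ.Sv v =
      Λ.tailMap '' (Λ.cyl v) := by
    ext χ
    constructor
    · intro hχ
      obtain ⟨x, hx, hxt⟩ := Λ.exists_path_of_mem_tail hv χ.2 hχ
      exact ⟨x, hx, Subtype.ext hxt⟩
    · rintro ⟨x, hx, rfl⟩
      have h00 : x.toFun 0 0 = v := (Λ.mem_cyl_vertex hv x).mp hx
      exact ⟨hv, 0, by rw [h00]; exact Λ.conn_refl hv⟩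
  rw [himg]
  exact (Λ.isCompact_cyl hv hrf).image hcont
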